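/- For every R ∈ SO(3) and all x, y ∈ ℝ³, with E(R) := (1/2)(tr(R)·I − R), the following bounds hold: xᵀ(I − E(R))x ≤ 2|R|_I²‖x‖² and xᵀ(I − E(R))y ≤ (2|R|_I² + √2·|R|_I)‖x‖‖y‖. -/
import Mathlib


open Matrix

/-- `R ∈ SO(3)`: `R Rᵀ = I` and `det R = 1`. -/
def IsSO3 (R : Matrix (Fin 3) (Fin 3) ℝ) : Prop := R * Rᵀ = 1 ∧ R.det = 1

/-- Squared normalized Euclidean distance on SO(3): `|R|_I² = (1/4) tr(I - R)`. -/
noncomputable def distI2 (R : Matrix (Fin 3) (Fin 3) ℝ) : ℝ :=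
  (1/4) * Matrix.trace (1 - R)

/-- `E(R) = (1/2)(tr(R)·I - R)`. -/
noncomputable def eMat (R : Matrix (Fin 3) (Fin 3) ℝ) : Matrix (Fin 3) (Fin 3) ℝ :=
  (1/2 : ℝ) • (Matrix.trace R • (1 : Matrix (Fin 3) (Fin 3) ℝ) - R)

/-- Euclidean norm on `ℝ³`. -/
noncomputable def vnorm (x : Fin 3 → ℝ) : ℝ := Real.sqrt (x ⬝ᵥ x)

lemma dot_self_nonneg (x : Fin 3 → ℝ) : 0 ≤ x ⬝ᵥ x :=
  Finset.sum_nonneg fun _ _ => mul_self_nonneg _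

lemma vnorm_nonneg (x : Fin 3 → ℝ) : 0 ≤ vnorm x := Real.sqrt_nonneg _

lemma vnorm_sq (x : Fin 3 → ℝ) : vnorm x ^ 2 = x ⬝ᵥ x :=
  Real.sq_sqrt (dot_self_nonneg x)

/-- Cauchy–Schwarz. -/
lemma cs (x y : Fin 3 → ℝ) : x ⬝ᵥ y ≤ vnorm x * vnorm y := by
  have h := Real.sum_mul_le_sqrt_mul_sqrt Finset.univ x y
  simpa [vnorm, dotProduct, sq] using h

lemma vnorm_neg (x : Fin 3 → ℝ) : vnorm (-x) = vnorm x := by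
  unfold vnorm; congr 1; simp [dotProduct]

lemma cs' (x y : Fin 3 → ℝ) : -(x ⬝ᵥ y) ≤ vnorm x * vnorm y := by
  have h := cs (-x) y
  simpa [vnorm_neg, neg_dotProduct] using h

/-- Frobenius bound `‖M v‖ ≤ ‖M‖_F ‖v‖`. -/
lemma mulVec_vnorm_le (M : Matrix (Fin 3) (Fin 3) ℝ) (v : Fin 3 → ℝ) :
    vnorm (M.mulVec v) ≤ Real.sqrt (∑ i, ∑ j, M i j ^ 2) * vnorm v := by
  have hdot : (M.mulVec v) ⬝ᵥ (M.mulVec v) ≤ (∑ i, ∑ j, M i j ^ 2) * (v ⬝ᵥ v) := by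
    have hrow : ∀ i : Fin 3, (∑ j, M i j * v j) ^ 2 ≤ (∑ j, M i j ^ 2) * ∑ j, v j ^ 2 :=
      fun i => Finset.sum_mul_sq_le_sq_mul_sq Finset.univ (M i) v
    calc (M.mulVec v) ⬝ᵥ (M.mulVec v) = ∑ i, (∑ j, M i j * v j) ^ 2 := by
            simp [dotProduct, Matrix.mulVec, sq]
      _ ≤ ∑ i, ((∑ j, M i j ^ 2) * ∑ j, v j ^ 2) := Finset.sum_le_sum fun i _ => hrow i
      _ = (∑ i, ∑ j, M i j ^ 2) * (v ⬝ᵥ v) := by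
            rw [← Finset.sum_mul]; congr 1; simp [dotProduct, sq]
  calc vnorm (M.mulVec v) ≤ Real.sqrt ((∑ i, ∑ j, M i j ^ 2) * (v ⬝ᵥ v)) :=
        Real.sqrt_le_sqrt hdot
    _ = Real.sqrt (∑ i, ∑ j, M i j ^ 2) * vnorm v := by
        rw [Real.sqrt_mul (by positivity)]; rfl

/-- `xᵀ(I - E(R))x ≤ 2|R|_I²‖x‖²` and
`xᵀ(I - E(R))y ≤ (2|R|_I² + √2 |R|_I)‖x‖‖y‖` for `R ∈ SO(3)`. -/
theorem stmt9 (R : Matrix (Fin 3) (Fin 3) ℝ) (hR : IsSO3 R) (x y : Fin 3 → ℝ) :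
    x ⬝ᵥ ((1 - eMat R).mulVec x) ≤ 2 * distI2 R * (vnorm x)^2 ∧
    x ⬝ᵥ ((1 - eMat R).mulVec y) ≤
      (2 * distI2 R + Real.sqrt 2 * Real.sqrt (distI2 R)) * vnorm x * vnorm y := by
  set d := distI2 R with hd
  have hRtR : Rᵀ * R = 1 := mul_eq_one_comm.mp hR.1
  -- sum of all squared entries is 3
  have h3 : ∑ i, ∑ j, R i j ^ 2 = 3 := by
    have := congrArg Matrix.trace hR.1
    simp only [Matrix.trace, Matrix.diag, Matrix.mul_apply, Matrix.transpose_apply,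
      Matrix.trace_one] at this
    simpa [sq, Fintype.card_fin] using this
  -- d ≥ 0
  have hd0 : 0 ≤ d := by
    have ht : d = (1/4) * (3 - (R 0 0 + R 1 1 + R 2 2)) := by
      simp [hd, distI2, Matrix.trace, Matrix.diag, Fin.sum_univ_three, Matrix.sub_apply,
        Matrix.one_apply]
    rw [ht]
    simp only [Fin.sum_univ_three] at h3
    nlinarith [sq_nonneg (R 0 0 - 1), sq_nonneg (R 1 1 - 1), sq_nonneg (R 2 2 - 1),
      sq_nonneg (R 0 1), sq_nonneg (R 0 2), sq_nonneg (R 1 0), sq_nonneg (R 1 2),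
      sq_nonneg (R 2 0), sq_nonneg (R 2 1)]
  -- Frobenius norm of 1 - R
  have hS : ∑ i, ∑ j, ((1 - R) i j) ^ 2 = 8 * d := by
    have hdd : d = (1/4) * (3 - (R 0 0 + R 1 1 + R 2 2)) := by
      simp [hd, distI2, Matrix.trace, Matrix.diag, Fin.sum_univ_three, Matrix.sub_apply,
        Matrix.one_apply]
    simp only [Fin.sum_univ_three] at h3
    simp only [Fin.sum_univ_three, Matrix.sub_apply, Matrix.one_apply, hdd]
    norm_num [Fin.ext_iff]
    nlinarith [h3]
  -- norm preservation
  have hpres : ∀ v w : Fin 3 → ℝ, (R.mulVec v) ⬝ᵥ (R.mulVec w) = v ⬝ᵥ w := by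
    intro v w
    rw [Matrix.dotProduct_mulVec, ← Matrix.vecMul_transpose, Matrix.vecMul_vecMul,
      hRtR, Matrix.vecMul_one]
  have hpresn : vnorm (R.mulVec x) = vnorm x := by
    unfold vnorm; rw [hpres x x]
  -- decomposition of 1 - eMat R
  have hkey : (1 : Matrix (Fin 3) (Fin 3) ℝ) - eMat R
      = (2 * d) • (1 : Matrix (Fin 3) (Fin 3) ℝ) - (1/2 : ℝ) • (1 - R) := by
    have htr : Matrix.trace ((1 : Matrix (Fin 3) (Fin 3) ℝ) - R) = 3 - Matrix.trace R := by
      simp [Matrix.trace_sub, Matrix.trace_one]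
    rw [hd, distI2, htr, eMat]
    module
  have hexp : ∀ v w : Fin 3 → ℝ,
      v ⬝ᵥ ((1 - eMat R).mulVec w) = 2 * d * (v ⬝ᵥ w) - (1/2) * (v ⬝ᵥ ((1 - R).mulVec w)) := by
    intro v w
    rw [hkey]
    simp [Matrix.sub_mulVec, Matrix.smul_mulVec, Matrix.one_mulVec, dotProduct_sub,
      dotProduct_smul, smul_eq_mul]
  constructor
  · -- first inequality
    rw [hexp x x, vnorm_sq]
    have h1 : x ⬝ᵥ ((1 - R).mulVec x) = x ⬝ᵥ x - x ⬝ᵥ (R.mulVec x) := by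
      simp [Matrix.sub_mulVec, Matrix.one_mulVec, dotProduct_sub]
    have h2 : x ⬝ᵥ (R.mulVec x) ≤ x ⬝ᵥ x := by
      have := cs x (R.mulVec x)
      rw [hpresn] at this
      calc x ⬝ᵥ (R.mulVec x) ≤ vnorm x * vnorm x := this
        _ = x ⬝ᵥ x := by rw [← sq, vnorm_sq]
    linarith
  · -- second inequality
    rw [hexp x y]
    have hxy : x ⬝ᵥ y ≤ vnorm x * vnorm y := cs x y
    have hbd : -(x ⬝ᵥ ((1 - R).mulVec y)) ≤ vnorm x * (Real.sqrt (8 * d) * vnorm y) := by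
      have h1 := cs' x ((1 - R).mulVec y)
      have h2 := mulVec_vnorm_le (1 - R) y
      rw [hS] at h2
      calc -(x ⬝ᵥ ((1 - R).mulVec y)) ≤ vnorm x * vnorm ((1 - R).mulVec y) := h1
        _ ≤ vnorm x * (Real.sqrt (8 * d) * vnorm y) := by
            exact mul_le_mul_of_nonneg_left h2 (vnorm_nonneg x)
    have h8 : Real.sqrt (8 * d) = 2 * (Real.sqrt 2 * Real.sqrt d) := by
      rw [show (8 : ℝ) * d = 2 ^ 2 * (2 * d) by ring, Real.sqrt_mul (by positivity),
        Real.sqrt_sq (by norm_num : (0:ℝ) ≤ 2), Real.sqrt_mul (by norm_num : (0:ℝ) ≤ 2)]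
    rw [h8] at hbd
    have hterm1 : 2 * d * (x ⬝ᵥ y) ≤ 2 * d * (vnorm x * vnorm y) :=
      mul_le_mul_of_nonneg_left hxy (by linarith)
    nlinarith [hbd, hterm1]
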